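/- Let R > √5/2 and set c = 1/2 − 1/(4R²) + sqrt(1/4 − (5R² − 1)/(16R⁴)). Then 1/4 − (5R² − 1)/(16R⁴) > 0, c satisfies the equation 1 + 8c = 16R²·c·(1 − c), and 1/2 < c < 1. Consequently the angle φ = arccos(√c) satisfies 0 < φ < π/4 and 1 + 8cos²φ = 16R² sin²φ cos²φ. -/

import Mathlib

set_option maxHeartbeats 1000000


/-- For `R > √5/2`, the number `c = 1/2 - 1/(4R²) + sqrt(1/4 - (5R² - 1)/(16R⁴))` is
well defined (the expression under the square root is positive), satisfies
`1 + 8c = 16R²·c·(1 - c)` and `1/2 < c < 1`; consequently `φ = arccos √c` satisfies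
`0 < φ < π/4` and `1 + 8cos²φ = 16R² sin²φ cos²φ`. -/
theorem phi_equation_solution (R c : ℝ) (hR : Real.sqrt 5 / 2 < R)
    (hc : c = 1 / 2 - 1 / (4 * R ^ 2) + Real.sqrt (1 / 4 - (5 * R ^ 2 - 1) / (16 * R ^ 4))) :
    0 < 1 / 4 - (5 * R ^ 2 - 1) / (16 * R ^ 4) ∧
    1 + 8 * c = 16 * R ^ 2 * c * (1 - c) ∧
    1 / 2 < c ∧ c < 1 ∧
    0 < Real.arccos (Real.sqrt c) ∧
    Real.arccos (Real.sqrt c) < Real.pi / 4 ∧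
    1 + 8 * Real.cos (Real.arccos (Real.sqrt c)) ^ 2 =
      16 * R ^ 2 * Real.sin (Real.arccos (Real.sqrt c)) ^ 2 *
        Real.cos (Real.arccos (Real.sqrt c)) ^ 2 := by
  have h5 : Real.sqrt 5 ^ 2 = 5 := Real.sq_sqrt (by norm_num)
  have hs5 : 0 < Real.sqrt 5 := Real.sqrt_pos.mpr (by norm_num)
  have hRpos : 0 < R := lt_trans (by positivity) hR
  have hR2 : 5 / 4 < R ^ 2 := by nlinarith
  have hR2pos : 0 < R ^ 2 := by positivity
  have hR4pos : 0 < R ^ 4 := by positivity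
  set D : ℝ := 1 / 4 - (5 * R ^ 2 - 1) / (16 * R ^ 4) with hD
  have hDval : D = (4 * R ^ 2 - 1) * (R ^ 2 - 1) / (16 * R ^ 4) := by
    rw [hD]; field_simp; ring
  have hDpos : 0 < D := by
    rw [hDval]
    apply div_pos (by nlinarith) (by positivity)
  set s : ℝ := Real.sqrt D with hsdef
  have hsnn : 0 ≤ s := Real.sqrt_nonneg _
  have hs2 : s ^ 2 = D := Real.sq_sqrt hDpos.le
  have hcgt : 1 / 2 < c := by
    have h1 : 1 / (4 * R ^ 2) < s := by
      rw [hsdef, show (1 : ℝ) / (4 * R ^ 2) = Real.sqrt ((1 / (4 * R ^ 2)) ^ 2) by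
        rw [Real.sqrt_sq (by positivity)]]
      apply Real.sqrt_lt_sqrt (by positivity)
      have hdiff : D - (1 / (4 * R ^ 2)) ^ 2 = (4 * R ^ 2 - 5) / (16 * R ^ 2) := by
        rw [hD]; field_simp; ring
      have : (0:ℝ) < (4 * R ^ 2 - 5) / (16 * R ^ 2) := by
        apply div_pos (by nlinarith) (by positivity)
      linarith
    rw [hc]; linarith
  have hclt : c < 1 := by
    have h1 : s < 1 / 2 + 1 / (4 * R ^ 2) := by
      rw [hsdef]
      apply Real.sqrt_lt' (by positivity) |>.mpr
      have hdiff : (1 / 2 + 1 / (4 * R ^ 2)) ^ 2 - D = 9 * R ^ 2 / (16 * R ^ 4) := by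
        rw [hD]; field_simp; ring
      have : (0:ℝ) < 9 * R ^ 2 / (16 * R ^ 4) := by positivity
      linarith
    rw [hc]; linarith
  have heq : 1 + 8 * c = 16 * R ^ 2 * c * (1 - c) := by
    have hD2 : 16 * R ^ 4 * D = 4 * R ^ 4 - 5 * R ^ 2 + 1 := by
      rw [hDval]; field_simp; ring
    have hc2 : c = 1 / 2 - 1 / (4 * R ^ 2) + s := hc
    have : 16 * R ^ 4 * s ^ 2 = 4 * R ^ 4 - 5 * R ^ 2 + 1 := by rw [hs2]; exact hD2
    rw [hc2]
    field_simp
    nlinarith [this]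
  have hcpos : 0 < c := by linarith
  have hsc1 : Real.sqrt c < 1 := by
    rw [show (1:ℝ) = Real.sqrt 1 by simp]
    exact Real.sqrt_lt_sqrt hcpos.le hclt
  have hsc0 : 0 < Real.sqrt c := Real.sqrt_pos.mpr hcpos
  have hcos : Real.cos (Real.arccos (Real.sqrt c)) = Real.sqrt c :=
    Real.cos_arccos (by linarith) hsc1.le
  have hcossq : Real.cos (Real.arccos (Real.sqrt c)) ^ 2 = c := by
    rw [hcos]; exact Real.sq_sqrt hcpos.le
  refine ⟨hDpos, heq, hcgt, hclt, Real.arccos_pos.mpr hsc1, ?_, ?_⟩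
  · have h4 : Real.pi / 4 = Real.arccos (Real.sqrt 2 / 2) := by
      rw [← Real.cos_pi_div_four, Real.arccos_cos (by positivity)
        (by linarith [Real.pi_pos])]
    rw [h4]
    have h22 : Real.sqrt 2 * Real.sqrt 2 = 2 := Real.mul_self_sqrt (by norm_num)
    have hs2pos : 0 < Real.sqrt 2 := Real.sqrt_pos.mpr (by norm_num)
    have h2' : Real.sqrt 2 / 2 = Real.sqrt (1 / 2) := by
      rw [show (1:ℝ)/2 = (2:ℝ)⁻¹ by norm_num, Real.sqrt_inv]
      field_simp
      exact Real.sq_sqrt (by norm_num)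
    have hlt : Real.sqrt 2 / 2 < Real.sqrt c := by
      rw [h2']; exact Real.sqrt_lt_sqrt (by norm_num) hcgt
    have h2le : Real.sqrt 2 / 2 ≤ 1 := by nlinarith
    exact Real.strictAntiOn_arccos
      (Set.mem_Icc.mpr ⟨by linarith, h2le⟩)
      (Set.mem_Icc.mpr ⟨by linarith [Real.sqrt_nonneg c], hsc1.le⟩) hlt
  · have hsin : Real.sin (Real.arccos (Real.sqrt c)) ^ 2 = 1 - c := by
      rw [Real.sin_sq, hcossq]
    rw [hcossq, hsin]
    linarith [heq]
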